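/- arXiv:1002.4813 — 2 statements merged into one kernel-verified Lean document; each statement's English description precedes it below -/
import Mathlib

section
/- If ρ:(0,∞)→(0,∞) is regular and submultiplicative, then the lower index α(ρ) := sup_{x∈(0,1)} log ρ(x)/log x equals the limit as x→0 of log ρ(x)/log x. -/
open Set Filter

noncomputable section

/-- `ρ` is submultiplicative on `(0,∞)`. -/
def Submult (ρ : ℝ → ℝ) : Prop := ∀ x y : ℝ, 0 < x → 0 < y → ρ (x * y) ≤ ρ x * ρ y

/-- `ρ` is regular: bounded from above in some open neighborhood of `1`. -/
def RegularFn (ρ : ℝ → ℝ) : Prop := ∃ ε > (0:ℝ), ∃ M : ℝ, ∀ x : ℝ, |x - 1| < ε → ρ x ≤ M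

/-- Lower index `α(ρ) = sup_{0<x<1} log ρ(x) / log x`. -/
def alphaIdx (ρ : ℝ → ℝ) : ℝ := sSup ((fun x => Real.log (ρ x) / Real.log x) '' Ioo (0:ℝ) 1)

/-- Upper index `β(ρ) = inf_{x>1} log ρ(x) / log x`. -/
def betaIdx (ρ : ℝ → ℝ) : ℝ := sInf ((fun x => Real.log (ρ x) / Real.log x) '' Ioi (1:ℝ))

namespace AuxSubadd

variable {g : ℝ → ℝ}

lemma nsmul_le (hsub : ∀ s t : ℝ, g (s + t) ≤ g s + g t) :
    ∀ n : ℕ, 1 ≤ n → ∀ t : ℝ, g ((n : ℕ) * t) ≤ (n : ℕ) * g t := by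
  intro n
  induction n with
  | zero => intro h; exact absurd h (by norm_num)
  | succ k ih =>
    intro _ t
    rcases Nat.eq_zero_or_pos k with rfl | hk
    · simp
    · have h1 : ((k + 1 : ℕ) : ℝ) * t = ((k : ℕ) : ℝ) * t + t := by push_cast; ring
      rw [h1]
      calc g (((k : ℕ) : ℝ) * t + t) ≤ g (((k : ℕ) : ℝ) * t) + g t := hsub _ _
        _ ≤ ((k : ℕ) : ℝ) * g t + g t := by linarith [ih hk t]
        _ = ((k + 1 : ℕ) : ℝ) * g t := by push_cast; ring

/-- bounded above on compact intervals, step version -/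
lemma bdd_step (hsub : ∀ s t : ℝ, g (s + t) ≤ g s + g t) {δ M : ℝ} (hδ : 0 < δ)
    (hM0 : 0 ≤ M) (hM : ∀ s : ℝ, |s| ≤ δ → g s ≤ M) :
    ∀ n : ℕ, ∀ t : ℝ, |t| ≤ (n + 1) * δ → g t ≤ (n + 1) * M := by
  intro n
  induction n with
  | zero => intro t ht; simpa using hM t (by simpa using ht)
  | succ k ih =>
    intro t ht
    rcases le_or_gt |t| δ with h | h
    · have := hM t h
      have : (1 : ℝ) * M ≤ (k + 1 + 1) * M := by nlinarith
      nlinarith [hM t h]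
    · rcases le_or_gt 0 t with hpos | hneg
      · have h1 : |t - δ| ≤ (k + 1) * δ := by
          rw [abs_le] at ht ⊢
          push_cast at ht
          constructor <;> nlinarith [abs_nonneg t, le_abs_self t, neg_abs_le t]
        have h2 : g t ≤ g (t - δ) + g δ := by
          have := hsub (t - δ) δ; simpa using this
        have h3 := ih (t - δ) h1
        have h4 := hM δ (by rw [abs_of_pos hδ])
        push_cast
        push_cast at h3
        linarith
      · have h1 : |t + δ| ≤ (k + 1) * δ := by
          rw [abs_le] at ht ⊢
          push_cast at ht
          constructor <;> nlinarith [le_abs_self t, neg_abs_le t, abs_of_neg hneg]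
        have h2 : g t ≤ g (t + δ) + g (-δ) := by
          have := hsub (t + δ) (-δ); simpa using this
        have h3 := ih (t + δ) h1
        have h4 := hM (-δ) (by rw [abs_neg, abs_of_pos hδ])
        push_cast
        push_cast at h3
        linarith

/-- bounded above on all compact intervals -/
lemma bdd_compact (hsub : ∀ s t : ℝ, g (s + t) ≤ g s + g t)
    (hb : ∃ δ > (0:ℝ), ∃ M : ℝ, ∀ s : ℝ, |s| ≤ δ → g s ≤ M) :
    ∀ R : ℝ, ∃ M' : ℝ, ∀ t : ℝ, |t| ≤ R → g t ≤ M' := by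
  intro R
  obtain ⟨δ, hδ, M, hM⟩ := hb
  set M₀ := max M 0 with hM₀def
  have hM0 : 0 ≤ M₀ := le_max_right _ _
  have hM' : ∀ s : ℝ, |s| ≤ δ → g s ≤ M₀ := fun s hs => (hM s hs).trans (le_max_left _ _)
  obtain ⟨n, hn⟩ := exists_nat_ge (R / δ)
  refine ⟨(n + 1) * M₀, fun t ht => ?_⟩
  apply bdd_step hsub hδ hM0 hM' n
  have : R ≤ n * δ := by
    rw [div_le_iff₀ hδ] at hn
    linarith
  nlinarith

/-- key comparison: for t < 0 < u, g t / t ≤ g u / u. -/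
lemma key (hsub : ∀ s t : ℝ, g (s + t) ≤ g s + g t)
    (hb : ∃ δ > (0:ℝ), ∃ M : ℝ, ∀ s : ℝ, |s| ≤ δ → g s ≤ M)
    {t u : ℝ} (ht : t < 0) (hu : 0 < u) : g t / t ≤ g u / u := by
  obtain ⟨MR, hMR⟩ := bdd_compact hsub hb u
  -- show g t ≥ (t/u) * g u
  have main : (t / u) * g u ≤ g t := by
    set C := g 0 - MR - |g u| with hC
    have hstep : ∀ n : ℕ, 1 ≤ n → C / n ≤ g t - (t / u) * g u := by
      intro n hn
      have hnpos : (0:ℝ) < n := by exact_mod_cast hn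
      have harg : (0:ℝ) < n * (-t) / u := div_pos (mul_pos hnpos (by linarith)) hu
      set m := ⌈(n : ℝ) * (-t) / u⌉₊ with hm
      have hm1 : 1 ≤ m := Nat.one_le_ceil_iff.mpr harg
      have hmle : (n : ℝ) * (-t) / u ≤ m := Nat.le_ceil _
      have hmlt : (m : ℝ) < (n : ℝ) * (-t) / u + 1 :=
        Nat.ceil_lt_add_one harg.le
      set w := (m : ℝ) * u + (n : ℝ) * t with hw
      have hw0 : 0 ≤ w := by
        rw [div_le_iff₀ hu] at hmle
        simp only [hw]; nlinarith
      have hwu : w < u := by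
        have h2 : (m : ℝ) * u < (n : ℝ) * (-t) + u := by
          have h3 := mul_lt_mul_of_pos_right hmlt hu
          rw [add_mul, one_mul, div_mul_cancel₀ _ hu.ne'] at h3
          exact h3
        simp only [hw]; nlinarith
      -- upper bound on g w
      have hup : g w ≤ (m : ℝ) * g u + (n : ℝ) * g t := by
        have h1 : g w ≤ g ((m : ℝ) * u) + g ((n : ℝ) * t) := hsub _ _
        have h2 := nsmul_le hsub m hm1 u
        have h3 := nsmul_le hsub n hn t
        linarith
      -- lower bound on g w
      have hlow : g 0 - MR ≤ g w := by
        have h1 : g 0 ≤ g w + g (-w) := by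
          have := hsub w (-w); simpa using this
        have h2 : g (-w) ≤ MR := hMR (-w) (by rw [abs_neg, abs_of_nonneg hw0]; linarith)
        linarith
      -- bound m * g u
      have hmgu : (m : ℝ) * g u ≤ (n : ℝ) * (-t) / u * g u + |g u| := by
        rcases le_or_gt 0 (g u) with h | h
        · have : (m : ℝ) * g u ≤ ((n : ℝ) * (-t) / u + 1) * g u :=
            mul_le_mul_of_nonneg_right hmlt.le h
          have habs : g u ≤ |g u| := le_abs_self _
          nlinarith
        · have : (m : ℝ) * g u ≤ (n : ℝ) * (-t) / u * g u := by nlinarith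
          have : (0:ℝ) ≤ |g u| := abs_nonneg _
          nlinarith [mul_le_mul_of_nonpos_right hmle h.le]
      have hfin : C ≤ (n : ℝ) * (g t - (t / u) * g u) := by
        have : g 0 - MR ≤ (m : ℝ) * g u + (n : ℝ) * g t := le_trans hlow hup
        have he : (n : ℝ) * (-t) / u * g u = (n : ℝ) * (-(t / u) * g u) := by
          ring
        rw [hC]
        nlinarith [hmgu, this]
      rw [div_le_iff₀ hnpos]
      linarith [hfin]
    -- take limit n → ∞
    have hlim : Tendsto (fun n : ℕ => C / n) atTop (nhds 0) :=
      tendsto_const_div_atTop_nhds_zero_nat C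
    have : (0:ℝ) ≤ g t - (t / u) * g u := by
      refine le_of_tendsto hlim ?_
      filter_upwards [eventually_ge_atTop 1] with n hn using hstep n hn
    linarith
  rw [div_le_iff_of_neg ht]
  calc g u / u * t = t / u * g u := by ring
    _ ≤ g t := main

/-- The main limit lemma for subadditive functions. -/
lemma tendsto_div_atBot (hsub : ∀ s t : ℝ, g (s + t) ≤ g s + g t)
    (hb : ∃ δ > (0:ℝ), ∃ M : ℝ, ∀ s : ℝ, |s| ≤ δ → g s ≤ M) :
    Tendsto (fun t => g t / t) atBot
      (nhds (sSup ((fun t => g t / t) '' Iio (0:ℝ)))) := by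
  set S := (fun t => g t / t) '' Iio (0:ℝ) with hS
  have hne : S.Nonempty := ⟨g (-1) / (-1), ⟨-1, by norm_num, rfl⟩⟩
  have hbdd : BddAbove S := by
    refine ⟨g 1 / 1, fun y hy => ?_⟩
    obtain ⟨t, ht, rfl⟩ := hy
    exact key hsub hb ht one_pos
  set L := sSup S with hL
  have hub : ∀ t : ℝ, t < 0 → g t / t ≤ L := fun t ht =>
    le_csSup hbdd ⟨t, ht, rfl⟩
  rw [Metric.tendsto_nhds]
  intro ε hε
  obtain ⟨a, ⟨t₀, ht₀, rfl⟩, ha⟩ := exists_lt_of_lt_csSup hne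
    (show L - ε / 2 < L by linarith)
  rw [mem_Iio] at ht₀
  set c := g t₀ / t₀ with hc
  have ha' : L - ε / 2 < c := ha
  obtain ⟨M', hM'⟩ := bdd_compact hsub hb (-t₀)
  set A := (-t₀) * |c| + |M'| with hA
  have hA0 : 0 ≤ A := by
    have : 0 ≤ (-t₀) * |c| := mul_nonneg (by linarith) (abs_nonneg _)
    have := abs_nonneg M'
    linarith
  rw [eventually_atBot]
  refine ⟨min t₀ (-(2 * A / ε + 1)), fun t ht => ?_⟩
  have ht₀' : t ≤ t₀ := le_trans ht (min_le_left _ _)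
  have htneg : t < 0 := lt_of_le_of_lt ht₀' ht₀
  have htA : -(2 * A / ε + 1) ≥ t := le_trans ht (min_le_right _ _)
  have hnt : 2 * A / ε + 1 ≤ -t := by linarith
  have hntpos : 0 < -t := by linarith
  -- A / (-t) < ε / 2
  have hAsmall : A / (-t) < ε / 2 := by
    rw [div_lt_iff₀ hntpos]
    have : 2 * A / ε * ε = 2 * A := by field_simp
    nlinarith [mul_le_mul_of_nonneg_right hnt hε.le]
  -- decompose t = n * t₀ + s
  have hrat : (1:ℝ) ≤ t / t₀ := by
    rw [le_div_iff_of_neg ht₀]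
    linarith
  set n := ⌊t / t₀⌋₊ with hn
  have hn1 : 1 ≤ n := by
    rw [hn, Nat.one_le_floor_iff]
    exact hrat
  have hnle : (n : ℝ) ≤ t / t₀ := Nat.floor_le (by linarith)
  have hnlt : t / t₀ < n + 1 := Nat.lt_floor_add_one _
  set s := t - (n : ℝ) * t₀ with hs
  have hs0 : s ≤ 0 := by
    have := mul_le_mul_of_nonpos_right hnle (le_of_lt ht₀)
    rw [div_mul_cancel₀ _ ht₀.ne] at this
    simp only [hs]; linarith
  have hst₀ : t₀ < s := by
    have := mul_lt_mul_of_neg_right hnlt ht₀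
    rw [div_mul_cancel₀ _ ht₀.ne] at this
    simp only [hs]; linarith
  have hgs : g s ≤ M' := hM' s (by rw [abs_of_nonpos hs0]; linarith)
  -- g t ≤ n * g t₀ + g s
  have hgt : g t ≤ (n : ℝ) * g t₀ + M' := by
    have h1 : g t = g ((n : ℝ) * t₀ + s) := by rw [hs]; ring_nf
    have h2 := nsmul_le hsub n hn1 t₀
    calc g t = g ((n : ℝ) * t₀ + s) := h1
      _ ≤ g ((n : ℝ) * t₀) + g s := hsub _ _
      _ ≤ (n : ℝ) * g t₀ + M' := by linarith
  -- conclude the lower bound g t / t > c - ε/2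
  have hgt₀ : g t₀ = c * t₀ := by
    rw [hc, div_mul_cancel₀ _ ht₀.ne]
  have hnt₀ : (n : ℝ) * t₀ = t - s := by rw [hs]; ring
  have hkey : g t ≤ (t - s) * c + M' := by
    calc g t ≤ (n : ℝ) * g t₀ + M' := hgt
      _ = (t - s) * c + M' := by rw [hgt₀, ← hnt₀]; ring
  have hsc : -s * c ≤ (-t₀) * |c| := by
    have h1 : -s * c ≤ -s * |c| :=
      mul_le_mul_of_nonneg_left (le_abs_self c) (by linarith)
    have h2 : -s * |c| ≤ (-t₀) * |c| :=
      mul_le_mul_of_nonneg_right (by linarith) (abs_nonneg c)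
    linarith
  have hAlt : A < ε / 2 * (-t) := by
    rw [div_lt_iff₀ hntpos] at hAsmall
    exact hAsmall
  have hlower : c - ε / 2 < g t / t := by
    rw [lt_div_iff_of_neg htneg]
    have : (t - s) * c + M' ≤ c * t + A := by
      rw [hA]
      have := le_abs_self M'
      nlinarith
    nlinarith
  have hupper : g t / t ≤ L := hub t htneg
  rw [Real.dist_eq, abs_lt]
  constructor <;> [skip; skip]
  · linarith
  · linarith

end AuxSubadd

/-- If `ρ : (0,∞) → (0,∞)` is regular and submultiplicative, then the lower index
`α(ρ) = sup_{0<x<1} log ρ(x)/log x` equals the limit of `log ρ(x)/log x` as `x → 0⁺`. -/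
theorem tendsto_alphaIdx (ρ : ℝ → ℝ) (hpos : ∀ x : ℝ, 0 < x → 0 < ρ x)
    (hsub : Submult ρ) (hreg : RegularFn ρ) :
    Tendsto (fun x => Real.log (ρ x) / Real.log x) (nhdsWithin 0 (Ioi 0))
      (nhds (alphaIdx ρ)) := by
  set g : ℝ → ℝ := fun t => Real.log (ρ (Real.exp t)) with hg
  have hgsub : ∀ s t : ℝ, g (s + t) ≤ g s + g t := by
    intro s t
    have hps := hpos _ (Real.exp_pos s)
    have hpt := hpos _ (Real.exp_pos t)
    have hpst := hpos _ (mul_pos (Real.exp_pos s) (Real.exp_pos t))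
    simp only [hg, Real.exp_add]
    calc Real.log (ρ (Real.exp s * Real.exp t))
        ≤ Real.log (ρ (Real.exp s) * ρ (Real.exp t)) := by
          apply Real.log_le_log hpst
          exact hsub _ _ (Real.exp_pos s) (Real.exp_pos t)
      _ = Real.log (ρ (Real.exp s)) + Real.log (ρ (Real.exp t)) :=
          Real.log_mul hps.ne' hpt.ne'
  have hgbdd : ∃ δ > (0:ℝ), ∃ M : ℝ, ∀ s : ℝ, |s| ≤ δ → g s ≤ M := by
    obtain ⟨ε, hε, M, hM⟩ := hreg
    have hc : ContinuousAt Real.exp 0 := Real.continuous_exp.continuousAt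
    rw [Metric.continuousAt_iff] at hc
    obtain ⟨δ, hδ, hδ'⟩ := hc ε hε
    refine ⟨δ / 2, by linarith, Real.log M, fun s hs => ?_⟩
    have h1 : dist s 0 < δ := by
      rw [Real.dist_eq, sub_zero]
      linarith [hs]
    have h2 := hδ' h1
    rw [Real.dist_eq, Real.exp_zero] at h2
    have h3 : ρ (Real.exp s) ≤ M := hM _ h2
    exact Real.log_le_log (hpos _ (Real.exp_pos s)) h3
  have hset : (fun x => Real.log (ρ x) / Real.log x) '' Ioo (0:ℝ) 1
      = (fun t => g t / t) '' Iio 0 := by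
    ext y
    simp only [mem_image, mem_Ioo, mem_Iio]
    constructor
    · rintro ⟨x, ⟨hx0, hx1⟩, rfl⟩
      exact ⟨Real.log x, Real.log_neg hx0 hx1, by simp [hg, Real.exp_log hx0]⟩
    · rintro ⟨t, ht, rfl⟩
      exact ⟨Real.exp t, ⟨Real.exp_pos t, Real.exp_lt_one_iff.mpr ht⟩,
        by simp [hg, Real.log_exp]⟩
  have hmain := AuxSubadd.tendsto_div_atBot hgsub hgbdd
  have hcomp := hmain.comp Real.tendsto_log_nhdsGT_zero
  rw [alphaIdx, hset]
  refine Tendsto.congr' ?_ hcomp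
  filter_upwards [self_mem_nhdsWithin] with x hx
  simp only [Function.comp, hg, Real.exp_log (mem_Ioi.mp hx)]
end
end

section
/- If ρ:(0,∞)→(0,∞) is regular and submultiplicative, then −∞ < α(ρ) ≤ β(ρ) < +∞, where α(ρ) = sup_{x∈(0,1)} log ρ(x)/log x and β(ρ) = inf_{x∈(1,∞)} log ρ(x)/log x. -/
open Set Filter

noncomputable section

/-- iterated subadditivity -/
lemma subadd_nsmul (f : ℝ → ℝ) (hsub : ∀ u v : ℝ, f (u + v) ≤ f u + f v) :
    ∀ n : ℕ, 1 ≤ n → ∀ u : ℝ, f (n * u) ≤ n * f u := by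
  intro n hn
  induction n with
  | zero => omega
  | succ m ih =>
    intro u
    rcases Nat.eq_or_lt_of_le hn with h | h
    · have hm0 : m = 0 := by omega
      subst hm0
      norm_num
    · have hm : 1 ≤ m := by omega
      have h1 : f ((m + 1 : ℕ) * u) ≤ f (m * u) + f u := by
        have : ((m + 1 : ℕ) : ℝ) * u = (m : ℝ) * u + u := by push_cast; ring
        rw [this]; exact hsub _ _
      calc f ((m + 1 : ℕ) * u) ≤ f (m * u) + f u := h1
        _ ≤ m * f u + f u := by linarith [ih hm u]
        _ = ((m + 1 : ℕ) : ℝ) * f u := by push_cast; ring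

lemma subadd_bound_above (f : ℝ → ℝ) (hsub : ∀ u v : ℝ, f (u + v) ≤ f u + f v)
    (δ K : ℝ) (hδ : 0 < δ) (hK : ∀ u : ℝ, |u| < δ → f u ≤ K) :
    ∀ (n : ℕ), 1 ≤ n → ∀ r : ℝ, |r| < n * δ → f r ≤ n * K := by
  intro n hn r hr
  have hn0 : (0:ℝ) < n := by exact_mod_cast hn
  have h1 : |r / n| < δ := by
    rw [abs_div, abs_of_pos hn0, div_lt_iff₀ hn0]
    linarith [hr]
  have h2 : f (n * (r / n)) ≤ n * f (r / n) := subadd_nsmul f hsub n hn _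
  have h3 : (n : ℝ) * (r / n) = r := by field_simp
  rw [h3] at h2
  calc f r ≤ n * f (r / n) := h2
    _ ≤ n * K := mul_le_mul_of_nonneg_left (hK _ h1) (Nat.cast_nonneg n)

lemma key_lemma (f : ℝ → ℝ) (hsub : ∀ u v : ℝ, f (u + v) ≤ f u + f v)
    (δ K : ℝ) (hδ : 0 < δ) (hK : ∀ u : ℝ, |u| < δ → f u ≤ K) :
    ∀ s t : ℝ, s < 0 → 0 < t → f s / s ≤ f t / t := by
  intro s t hs ht
  have hf0 : 0 ≤ f 0 := by have := hsub 0 0; simp at this; linarith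
  -- choose N with t < N * δ
  obtain ⟨N, hN⟩ := exists_nat_gt (t / δ)
  have hN1 : 1 ≤ N := by
    by_contra h
    push_neg at h
    interval_cases N
    simp at hN
    nlinarith [div_pos ht hδ]
  have htN : t < N * δ := by
    rw [div_lt_iff₀ hδ] at hN; linarith
  -- lower bound for f on [0, t)
  have hlow : ∀ r : ℝ, 0 ≤ r → r < t → -(N * K) ≤ f r := by
    intro r h0 h1
    have hup : f (-r) ≤ N * K := by
      apply subadd_bound_above f hsub δ K hδ hK N hN1
      rw [abs_neg, abs_of_nonneg h0]; linarith
    have : f 0 ≤ f r + f (-r) := by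
      have := hsub r (-r); simpa using this
    linarith
  -- main inequality: A ≥ 0
  have hA0 : 0 ≤ f s - (s / t) * f t := by
    by_contra hneg
    push_neg at hneg
    obtain ⟨p, hp⟩ := exists_nat_gt ((N * K + |f t|) / (-(f s - (s / t) * f t)))
    have hp1 : 1 ≤ p := by
      by_contra h
      push_neg at h
      interval_cases p
      simp at hp
      have hKnn : 0 ≤ K := le_trans hf0 (hK 0 (by simpa using hδ))
      have : 0 ≤ (N * K + |f t|) / (s / t * f t - f s) := by
        apply div_nonneg
        · positivity
        · linarith
      linarith
    -- q = ceil(-p s / t)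
    set q : ℕ := ⌈(-(p:ℝ) * s) / t⌉₊ with hq
    have hqs : (-(p:ℝ) * s) / t ≤ q := Nat.le_ceil _
    have hps : 0 ≤ (-(p:ℝ) * s) / t := by
      apply div_nonneg _ ht.le
      have : (0:ℝ) < p := by exact_mod_cast hp1
      nlinarith
    have hqlt : (q : ℝ) < (-(p:ℝ) * s) / t + 1 := by
      exact Nat.ceil_lt_add_one hps
    have hq1 : 1 ≤ q := by
      rcases Nat.eq_zero_or_pos q with h | h
      · exfalso
        rw [h] at hqs
        push_cast at hqs
        have hp0 : (0:ℝ) < p := by exact_mod_cast hp1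
        have : 0 < (-(p:ℝ) * s) / t := div_pos (by nlinarith) ht
        linarith
      · exact h
    set r : ℝ := p * s + q * t with hr
    have hr0 : 0 ≤ r := by
      have := (div_le_iff₀ ht).mp hqs
      rw [hr]; linarith
    have hrt : r < t := by
      have hmul := mul_lt_mul_of_pos_right hqlt ht
      have hcan : (-(p:ℝ) * s / t) * t = -(p:ℝ) * s := div_mul_cancel₀ _ ht.ne'
      rw [hr]
      nlinarith
    -- f r ≤ p f s + q f t
    have hfr : f r ≤ p * f s + q * f t := by
      have h1 : f (p * s + q * t) ≤ f ((p:ℝ) * s) + f ((q:ℝ) * t) := hsub _ _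
      have h2 : f ((p:ℝ) * s) ≤ p * f s := by
        have := subadd_nsmul f hsub p hp1 s; exact_mod_cast this
      have h3 : f ((q:ℝ) * t) ≤ q * f t := by
        have := subadd_nsmul f hsub q hq1 t; exact_mod_cast this
      rw [hr]; linarith
    have hlb : -(N * K) ≤ f r := hlow r hr0 hrt
    -- q * f t ≤ (-p s / t) * f t + |f t|
    have hqft : (q:ℝ) * f t ≤ ((-(p:ℝ) * s) / t) * f t + |f t| := by
      rcases le_or_gt 0 (f t) with h | h
      · rw [abs_of_nonneg h]
        have h1 := mul_le_mul_of_nonneg_right hqlt.le h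
        nlinarith
      · have h1 : (q:ℝ) * f t ≤ ((-(p:ℝ) * s) / t) * f t :=
          mul_le_mul_of_nonpos_right hqs h.le
        linarith [abs_nonneg (f t)]
    -- combine : p * A ≥ -(N*K) - |f t|
    have hpA : -(N * K) - |f t| ≤ (p:ℝ) * (f s - (s / t) * f t) := by
      have heq : (p:ℝ) * (f s - (s / t) * f t)
          = (p:ℝ) * f s + ((-(p:ℝ) * s) / t) * f t := by ring
      linarith [hfr, hlb, hqft, heq]
    -- contradiction
    have hp0 : (0:ℝ) < p := by exact_mod_cast hp1
    rw [div_lt_iff₀ (by linarith : (0:ℝ) < -(f s - (s / t) * f t))] at hp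
    nlinarith
  -- conclude f s / s ≤ f t / t
  have hcan : (s / t) * f t * t = s * f t := by field_simp
  have h2 : 0 ≤ t * f s - s * f t := by nlinarith [mul_nonneg hA0 ht.le]
  have hpos' : 0 < -(s * t) := by nlinarith
  have hkey : f t / t - f s / s = (t * f s - s * f t) / (-(s * t)) := by
    field_simp [hs.ne, ht.ne']
    ring
  have h3 : 0 ≤ f t / t - f s / s := by
    rw [hkey]; exact div_nonneg h2 hpos'.le
  linarith

/-- If `ρ` is regular and submultiplicative, then `-∞ < α(ρ) ≤ β(ρ) < +∞`: the set defining
`α(ρ)` is bounded above, the set defining `β(ρ)` is bounded below, and `α(ρ) ≤ β(ρ)`. -/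
theorem alphaIdx_le_betaIdx (ρ : ℝ → ℝ) (hpos : ∀ x : ℝ, 0 < x → 0 < ρ x)
    (hsub : Submult ρ) (hreg : RegularFn ρ) :
    BddAbove ((fun x => Real.log (ρ x) / Real.log x) '' Ioo (0:ℝ) 1) ∧
    BddBelow ((fun x => Real.log (ρ x) / Real.log x) '' Ioi (1:ℝ)) ∧
    alphaIdx ρ ≤ betaIdx ρ := by
  obtain ⟨ε, hε, M, hM⟩ := hreg
  have hM1 : 0 < M := lt_of_lt_of_le (hpos 1 one_pos) (hM 1 (by simpa using hε))
  set f : ℝ → ℝ := fun u => Real.log (ρ (Real.exp u)) with hf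
  have hsubf : ∀ u v : ℝ, f (u + v) ≤ f u + f v := by
    intro u v
    have h1 : ρ (Real.exp (u + v)) ≤ ρ (Real.exp u) * ρ (Real.exp v) := by
      rw [Real.exp_add]; exact hsub _ _ (Real.exp_pos u) (Real.exp_pos v)
    have h2 : 0 < ρ (Real.exp (u + v)) := hpos _ (Real.exp_pos _)
    calc f (u + v) = Real.log (ρ (Real.exp (u + v))) := rfl
      _ ≤ Real.log (ρ (Real.exp u) * ρ (Real.exp v)) := Real.log_le_log h2 h1
      _ = f u + f v :=
        Real.log_mul (hpos _ (Real.exp_pos u)).ne' (hpos _ (Real.exp_pos v)).ne'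
  set δ := Real.log (1 + ε) with hδdef
  have hδ : 0 < δ := Real.log_pos (by linarith)
  have hK : ∀ u : ℝ, |u| < δ → f u ≤ Real.log M := by
    intro u hu
    rw [abs_lt] at hu
    have h1 : Real.exp u < 1 + ε := by
      have := Real.exp_lt_exp.mpr hu.2
      rwa [Real.exp_log (by linarith)] at this
    have h2 : 1 - ε < Real.exp u := by
      have hinv := Real.exp_lt_exp.mpr hu.1
      rw [Real.exp_neg, Real.exp_log (by linarith)] at hinv
      have hkey : (1 + ε) * (1 + ε)⁻¹ = 1 := mul_inv_cancel₀ (by linarith)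
      nlinarith [mul_lt_mul_of_pos_left hinv (show (0:ℝ) < 1 + ε by linarith),
        Real.exp_pos u, sq_nonneg ε]
    have hρ : ρ (Real.exp u) ≤ M := hM _ (by rw [abs_lt]; constructor <;> linarith)
    exact Real.log_le_log (hpos _ (Real.exp_pos u)) hρ
  have key := key_lemma f hsubf δ (Real.log M) hδ hK
  have htrans : ∀ x : ℝ, 0 < x →
      Real.log (ρ x) / Real.log x = f (Real.log x) / Real.log x := by
    intro x hx
    rw [hf]
    simp [Real.exp_log hx]
  have hub : ∀ a ∈ (fun x => Real.log (ρ x) / Real.log x) '' Ioo (0:ℝ) 1,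
      a ≤ f (Real.log 2) / Real.log 2 := by
    rintro a ⟨x, hx, rfl⟩
    have hlx : Real.log x < 0 := Real.log_neg hx.1 hx.2
    simp only
    rw [htrans x hx.1]
    exact key (Real.log x) (Real.log 2) hlx (Real.log_pos one_lt_two)
  have hlb : ∀ b ∈ (fun x => Real.log (ρ x) / Real.log x) '' Ioi (1:ℝ),
      f (Real.log (1/2)) / Real.log (1/2) ≤ b := by
    rintro b ⟨y, hy, rfl⟩
    have hly : 0 < Real.log y := Real.log_pos hy
    simp only
    rw [htrans y (lt_trans one_pos hy)]
    exact key (Real.log (1/2)) (Real.log y) (Real.log_neg (by norm_num) (by norm_num)) hly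
  have hSne : ((fun x => Real.log (ρ x) / Real.log x) '' Ioo (0:ℝ) 1).Nonempty :=
    ⟨_, ⟨1/2, by norm_num, rfl⟩⟩
  have hTne : ((fun x => Real.log (ρ x) / Real.log x) '' Ioi (1:ℝ)).Nonempty :=
    ⟨_, ⟨2, by norm_num, rfl⟩⟩
  refine ⟨⟨_, hub⟩, ⟨_, hlb⟩, ?_⟩
  unfold alphaIdx betaIdx
  apply csSup_le hSne
  rintro a ⟨x, hx, rfl⟩
  apply le_csInf hTne
  rintro b ⟨y, hy, rfl⟩
  simp only
  rw [htrans x hx.1, htrans y (lt_trans one_pos hy)]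
  exact key _ _ (Real.log_neg hx.1 hx.2) (Real.log_pos hy)
end
end
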